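/- (γ-generalised PTW recursion) Fix γ ∈ (0,1). Define the γ-weighted mixture PTW-KTE^γ_D(e_{1:t} || a_{1:t}) := Σ_{𝒫 ∈ C_D} ω_D(𝒫) ∏_{(c,d) ∈ 𝒫, c ≤ t} KTE(e_{c:min(d,t)} || a_{c:min(d,t)}), where ω_0({(t,t)}) := 1, ω_D({(t,t+2^D−1)}) := γ for D ≥ 1, and ω_D(S₁ ∪ S₂) := (1−γ)·ω_{D−1}(S₁)·ω_{D−1}(S₂). Then for every D ≥ 1 and 1 ≤ t ≤ 2^D, with k := 2^{D−1}, PTW-KTE^γ_D(e_{1:t} || a_{1:t}) = γ·KTE(e_{1:t} || a_{1:t}) + (1−γ)·PTW-KTE^γ_{D−1}(e_{1:min(t,k)} || a_{1:min(t,k)})·PTW-KTE^γ_{D−1}(e_{k+1:t} || a_{k+1:t}), where the last factor is 1 when t ≤ k and PTW-KTE^γ_0(e || a) := KTE(e || a). -/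
import Mathlib


/-- The Beta function `B(a,b) = Γ(a)Γ(b)/Γ(a+b)`. -/
noncomputable def betaFn (a b : ℝ) : ℝ := Real.Gamma a * Real.Gamma b / Real.Gamma (a + b)

/-- The Krichevsky–Trofimov probability of a binary string with `z` zeros and `o` ones:
`KT(x) = (1/π) · B(z + 1/2, o + 1/2)`.  (The empty string gets probability 1.) -/
noncomputable def ktProb (z o : ℕ) : ℝ :=
  betaFn ((z : ℝ) + 1 / 2) ((o : ℝ) + 1 / 2) / Real.pi

/-- `KTE(e_{c:d} ‖ a_{c:d}) := ∏_{x ∈ 𝒜} KT(e^x_{c:d})` where `e^x_{c:d}` is the subsequence of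
the percepts `e_i`, `c ≤ i ≤ d`, with `a_i = x`. -/
noncomputable def kteSeg {α : Type*} [Fintype α] [DecidableEq α]
    (e : ℕ → Bool) (a : ℕ → α) (c d : ℕ) : ℝ :=
  ∏ x : α, ktProb
    (((Finset.Icc c d).filter fun i => a i = x ∧ e i = false).card)
    (((Finset.Icc c d).filter fun i => a i = x ∧ e i = true).card)

/-- `CD D t` is the set `C_D(t)` of binary temporal partitions of `{t, …, t + 2^D − 1}`:
`C_0(t) = {{(t,t)}}` and
`C_{D+1}(t) = {{(t, t+2^{D+1}−1)}} ∪ {S₁ ∪ S₂ : S₁ ∈ C_D(t), S₂ ∈ C_D(t + 2^D)}`. -/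
def CD : ℕ → ℕ → Finset (Finset (ℕ × ℕ))
  | 0, t => {{(t, t)}}
  | D + 1, t =>
      insert {(t, t + 2 ^ (D + 1) - 1)}
        ((CD D t ×ˢ CD D (t + 2 ^ D)).image fun p => p.1 ∪ p.2)

/-- The exponent `Γ_D(𝒫)`, defined recursively by `Γ_0({(t,t)}) = 0`,
`Γ_{D+1}({(t, t+2^{D+1}−1)}) = 1`, and `Γ_{D+1}(S₁ ∪ S₂) = 1 + Γ_D(S₁) + Γ_D(S₂)`
(the two halves `S₁, S₂` of a split partition are recovered by filtering). -/
def GammaD : ℕ → ℕ → Finset (ℕ × ℕ) → ℕ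
  | 0, _, _ => 0
  | D + 1, t, P =>
      if P = {(t, t + 2 ^ (D + 1) - 1)} then 1
      else 1 + GammaD D t (P.filter fun s => s.2 < t + 2 ^ D)
             + GammaD D (t + 2 ^ D) (P.filter fun s => t + 2 ^ D ≤ s.1)

/-- `PTW-KTE_D` started at time `t0`, evaluated on the data up to time `t`:
`Σ_{𝒫 ∈ C_D(t0)} 2^{−Γ_D(𝒫)} ∏_{(c,d) ∈ 𝒫, c ≤ t} KTE(e_{c:min(d,t)} ‖ a_{c:min(d,t)})`. -/
noncomputable def ptwKTE {α : Type*} [Fintype α] [DecidableEq α]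
    (D t0 : ℕ) (e : ℕ → Bool) (a : ℕ → α) (t : ℕ) : ℝ :=
  ∑ P ∈ CD D t0, (2 : ℝ) ^ (-(GammaD D t0 P : ℤ)) *
    ∏ s ∈ P.filter fun s => s.1 ≤ t, kteSeg e a s.1 (min s.2 t)

/-- The active segments at time `t`: segments containing `t` that belong to some binary
temporal partition in `C_D := C_D(1)`. -/
def ActiveSegments (D t : ℕ) : Set (ℕ × ℕ) :=
  {s : ℕ × ℕ | s.1 ≤ t ∧ t ≤ s.2 ∧ ∃ P ∈ CD D 1, s ∈ P}

/-- The γ-weight `ω_D(𝒫)` over binary temporal partitions, defined recursively by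
`ω_0({(t,t)}) = 1`, `ω_{D+1}({(t,t+2^{D+1}−1)}) = γ`, and
`ω_{D+1}(S₁ ∪ S₂) = (1−γ)·ω_D(S₁)·ω_D(S₂)` (the halves are recovered by filtering). -/
noncomputable def omegaWt (γ : ℝ) : ℕ → ℕ → Finset (ℕ × ℕ) → ℝ
  | 0, _, _ => 1
  | D + 1, t, P =>
      if P = {(t, t + 2 ^ (D + 1) - 1)} then γ
      else (1 - γ) * omegaWt γ D t (P.filter fun s => s.2 < t + 2 ^ D)
             * omegaWt γ D (t + 2 ^ D) (P.filter fun s => t + 2 ^ D ≤ s.1)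

lemma CD_bounds : ∀ D t0 P, P ∈ CD D t0 → ∀ s ∈ P,
    t0 ≤ s.1 ∧ s.1 ≤ s.2 ∧ s.2 ≤ t0 + 2 ^ D - 1 := by
  intro D
  induction D with
  | zero =>
    intro t0 P hP s hs
    simp [CD] at hP
    subst hP
    simp at hs
    subst hs
    simp
  | succ D ih =>
    intro t0 P hP s hs
    have h1 : (1:ℕ) ≤ 2 ^ D := Nat.one_le_two_pow
    have h2 : (2:ℕ) ^ (D+1) = 2 ^ D * 2 := pow_succ 2 D
    simp only [CD, Finset.mem_insert, Finset.mem_image, Finset.mem_product] at hP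
    rcases hP with rfl | ⟨⟨S₁, S₂⟩, ⟨hS₁, hS₂⟩, rfl⟩
    · simp at hs
      subst hs
      refine ⟨le_refl _, ?_, le_refl _⟩
      omega
    · rcases Finset.mem_union.mp hs with h | h
      · have := ih t0 S₁ hS₁ s h
        omega
      · have := ih (t0 + 2 ^ D) S₂ hS₂ s h
        omega

lemma CD_nonempty : ∀ D t0 P, P ∈ CD D t0 → P.Nonempty := by
  intro D
  induction D with
  | zero =>
    intro t0 P hP
    simp [CD] at hP; subst hP; simp
  | succ D ih =>
    intro t0 P hP
    simp only [CD, Finset.mem_insert, Finset.mem_image, Finset.mem_product] at hP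
    rcases hP with rfl | ⟨⟨S₁, S₂⟩, ⟨hS₁, hS₂⟩, rfl⟩
    · simp
    · exact (ih t0 S₁ hS₁).mono Finset.subset_union_left

lemma filter_left {D t0 : ℕ} {S₁ S₂ : Finset (ℕ × ℕ)}
    (h1 : S₁ ∈ CD D t0) (h2 : S₂ ∈ CD D (t0 + 2 ^ D)) :
    (S₁ ∪ S₂).filter (fun s => s.2 < t0 + 2 ^ D) = S₁ := by
  ext s
  simp only [Finset.mem_filter, Finset.mem_union]
  constructor
  · rintro ⟨h | h, hlt⟩
    · exact h
    · have := CD_bounds D _ S₂ h2 s h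
      omega
  · intro h
    have := CD_bounds D _ S₁ h1 s h
    have hp : (1:ℕ) ≤ 2 ^ D := Nat.one_le_two_pow
    exact ⟨Or.inl h, by omega⟩

lemma filter_right {D t0 : ℕ} {S₁ S₂ : Finset (ℕ × ℕ)}
    (h1 : S₁ ∈ CD D t0) (h2 : S₂ ∈ CD D (t0 + 2 ^ D)) :
    (S₁ ∪ S₂).filter (fun s => t0 + 2 ^ D ≤ s.1) = S₂ := by
  ext s
  simp only [Finset.mem_filter, Finset.mem_union]
  constructor
  · rintro ⟨h | h, hle⟩
    · have := CD_bounds D _ S₁ h1 s h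
      have hp : (1:ℕ) ≤ 2 ^ D := Nat.one_le_two_pow
      omega
    · exact h
  · intro h
    exact ⟨Or.inr h, (CD_bounds D _ S₂ h2 s h).1⟩

lemma CD_disjoint {D t0 : ℕ} {S₁ S₂ : Finset (ℕ × ℕ)}
    (h1 : S₁ ∈ CD D t0) (h2 : S₂ ∈ CD D (t0 + 2 ^ D)) : Disjoint S₁ S₂ := by
  rw [Finset.disjoint_left]
  intro s hs1 hs2
  have b1 := CD_bounds D _ S₁ h1 s hs1
  have b2 := CD_bounds D _ S₂ h2 s hs2
  have hp : (1:ℕ) ≤ 2 ^ D := Nat.one_le_two_pow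
  omega

lemma union_ne_single {D t0 : ℕ} {S₁ S₂ : Finset (ℕ × ℕ)}
    (h1 : S₁ ∈ CD D t0) (h2 : S₂ ∈ CD D (t0 + 2 ^ D)) :
    S₁ ∪ S₂ ≠ {(t0, t0 + 2 ^ (D + 1) - 1)} := by
  intro h
  obtain ⟨s, hs⟩ := CD_nonempty D _ S₂ h2
  have heq : s ∈ S₁ ∪ S₂ := Finset.mem_union_right _ hs
  rw [h, Finset.mem_singleton] at heq
  have hb := CD_bounds D _ S₂ h2 s hs
  have hp : (1:ℕ) ≤ 2 ^ D := Nat.one_le_two_pow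
  have hs1 : s.1 = t0 := by rw [heq]
  omega

lemma CD_injOn (D t0 : ℕ) :
    Set.InjOn (fun p : Finset (ℕ×ℕ) × Finset (ℕ×ℕ) => p.1 ∪ p.2)
      (CD D t0 ×ˢ CD D (t0 + 2 ^ D)) := by
  rintro ⟨S₁, S₂⟩ hp ⟨T₁, T₂⟩ hq h
  simp only [Finset.coe_product, Set.mem_prod, Finset.mem_coe] at hp hq
  simp only at h
  have e1 : S₁ = T₁ := by
    rw [← filter_left hp.1 hp.2, ← filter_left hq.1 hq.2, h]
  have e2 : S₂ = T₂ := by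
    rw [← filter_right hp.1 hp.2, ← filter_right hq.1 hq.2, h]
  simp [e1, e2]

lemma single_not_mem_image {D t0 : ℕ} :
    ({(t0, t0 + 2 ^ (D + 1) - 1)} : Finset (ℕ×ℕ)) ∉
      ((CD D t0 ×ˢ CD D (t0 + 2 ^ D)).image fun p => p.1 ∪ p.2) := by
  rw [Finset.mem_image]
  rintro ⟨⟨S₁, S₂⟩, hp, h⟩
  rw [Finset.mem_product] at hp
  exact union_ne_single hp.1 hp.2 h

lemma omega_sum (γ : ℝ) : ∀ D t0, ∑ P ∈ CD D t0, omegaWt γ D t0 P = 1 := by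
  intro D
  induction D with
  | zero => intro t0; simp [CD, omegaWt]
  | succ D ih =>
    intro t0
    rw [show CD (D+1) t0 = insert {(t0, t0 + 2 ^ (D + 1) - 1)}
        ((CD D t0 ×ˢ CD D (t0 + 2 ^ D)).image fun p => p.1 ∪ p.2) from rfl]
    rw [Finset.sum_insert single_not_mem_image,
      Finset.sum_image (fun p hp q hq h => CD_injOn D t0 (by simpa using hp) (by simpa using hq) h),
      Finset.sum_product]
    have : ∀ S₁ ∈ CD D t0, ∀ S₂ ∈ CD D (t0 + 2 ^ D),
        omegaWt γ (D+1) t0 (S₁ ∪ S₂) =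
          (1 - γ) * (omegaWt γ D t0 S₁ * omegaWt γ D (t0 + 2 ^ D) S₂) := by
      intro S₁ h1 S₂ h2
      rw [omegaWt, if_neg (union_ne_single h1 h2), filter_left h1 h2, filter_right h1 h2]
      ring
    rw [Finset.sum_congr rfl fun S₁ h1 => Finset.sum_congr rfl fun S₂ h2 => this S₁ h1 S₂ h2]
    simp only [← Finset.mul_sum, ih, mul_one]
    have hsing : omegaWt γ (D+1) t0 {(t0, t0 + 2 ^ (D + 1) - 1)} = γ := by
      rw [omegaWt, if_pos rfl]
    rw [hsing]
    ring


/-- The γ-weighted mixture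
`PTW-KTE^γ_D(e‖a) := Σ_{𝒫 ∈ C_D(t0)} ω_D(𝒫) ∏_{(c,d) ∈ 𝒫, c ≤ t} KTE(e_{c:min(d,t)} ‖ a_{c:min(d,t)})`. -/
noncomputable def ptwKTEγ {α : Type*} [Fintype α] [DecidableEq α]
    (γ : ℝ) (D t0 : ℕ) (e : ℕ → Bool) (a : ℕ → α) (t : ℕ) : ℝ :=
  ∑ P ∈ CD D t0, omegaWt γ D t0 P *
    ∏ s ∈ P.filter fun s => s.1 ≤ t, kteSeg e a s.1 (min s.2 t)

/-- **γ-generalised PTW recursion.** For `γ ∈ (0,1)`, every `D ≥ 1` and `1 ≤ t ≤ 2^D`, with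
`k := 2^{D−1}`,
`PTW-KTE^γ_D(e_{1:t}‖a_{1:t}) = γ·KTE(e_{1:t}‖a_{1:t})
  + (1−γ)·PTW-KTE^γ_{D−1}(e_{1:min(t,k)}‖a_{1:min(t,k)})·PTW-KTE^γ_{D−1}(e_{k+1:t}‖a_{k+1:t})`,
where the last factor is `1` when `t ≤ k`. -/
theorem ptw_kte_gamma_recursion {α : Type*} [Fintype α] [DecidableEq α]
    (γ : ℝ) (hγ : γ ∈ Set.Ioo (0 : ℝ) 1)
    (D : ℕ) (hD : 1 ≤ D) (t : ℕ) (ht1 : 1 ≤ t) (ht2 : t ≤ 2 ^ D)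
    (e : ℕ → Bool) (a : ℕ → α) :
    ptwKTEγ γ D 1 e a t =
      γ * kteSeg e a 1 t +
      (1 - γ) * ptwKTEγ γ (D - 1) 1 e a (min t (2 ^ (D - 1))) *
        (if t ≤ 2 ^ (D - 1) then 1 else ptwKTEγ γ (D - 1) (2 ^ (D - 1) + 1) e a t) := by
  obtain ⟨D', rfl⟩ : ∃ D', D = D' + 1 := ⟨D - 1, by omega⟩
  simp only [Nat.add_sub_cancel]
  have hp : (1:ℕ) ≤ 2 ^ D' := Nat.one_le_two_pow
  have hpow : (2:ℕ) ^ (D'+1) = 2 ^ D' * 2 := pow_succ 2 D'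
  rw [ptwKTEγ]
  rw [show CD (D'+1) 1 = insert {(1, 1 + 2 ^ (D' + 1) - 1)}
      ((CD D' 1 ×ˢ CD D' (1 + 2 ^ D')).image fun p => p.1 ∪ p.2) from rfl]
  rw [Finset.sum_insert single_not_mem_image,
    Finset.sum_image (fun p hp q hq h => CD_injOn D' 1 (by simpa using hp) (by simpa using hq) h),
    Finset.sum_product]
  have hsingle : omegaWt γ (D'+1) 1 {(1, 1 + 2 ^ (D'+1) - 1)} *
      ∏ s ∈ ({(1, 1 + 2 ^ (D'+1) - 1)} : Finset (ℕ×ℕ)).filter (fun s => s.1 ≤ t),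
        kteSeg e a s.1 (min s.2 t) = γ * kteSeg e a 1 t := by
    rw [omegaWt, if_pos rfl]
    congr 1
    rw [Finset.filter_singleton, if_pos (by simpa using ht1), Finset.prod_singleton]
    have hmin : min (1 + 2 ^ (D'+1) - 1) t = t := by omega
    rw [hmin]
  rw [hsingle]
  have hmain : ∀ S₁ ∈ CD D' 1, ∀ S₂ ∈ CD D' (1 + 2 ^ D'),
      omegaWt γ (D'+1) 1 (S₁ ∪ S₂) *
        ∏ s ∈ (S₁ ∪ S₂).filter (fun s => s.1 ≤ t), kteSeg e a s.1 (min s.2 t)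
      = (1 - γ) * ((omegaWt γ D' 1 S₁ *
            ∏ s ∈ S₁.filter (fun s => s.1 ≤ min t (2 ^ D')),
              kteSeg e a s.1 (min s.2 (min t (2 ^ D'))))
        * (omegaWt γ D' (1 + 2 ^ D') S₂ *
            ∏ s ∈ S₂.filter (fun s => s.1 ≤ t), kteSeg e a s.1 (min s.2 t))) := by
    intro S₁ h1 S₂ h2
    rw [omegaWt, if_neg (union_ne_single h1 h2), filter_left h1 h2, filter_right h1 h2]
    rw [Finset.filter_union,
      Finset.prod_union (Finset.disjoint_filter_filter (CD_disjoint h1 h2))]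
    have hP1 : (∏ s ∈ S₁.filter (fun s => s.1 ≤ t), kteSeg e a s.1 (min s.2 t))
        = ∏ s ∈ S₁.filter (fun s => s.1 ≤ min t (2 ^ D')),
            kteSeg e a s.1 (min s.2 (min t (2 ^ D'))) := by
      have hfe : S₁.filter (fun s => s.1 ≤ t) = S₁.filter (fun s => s.1 ≤ min t (2 ^ D')) := by
        apply Finset.filter_congr
        intro s hs
        have hb := CD_bounds D' 1 S₁ h1 s hs
        omega
      rw [hfe]
      apply Finset.prod_congr rfl
      intro s hs
      obtain ⟨hs1, hs2⟩ := Finset.mem_filter.mp hs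
      have hb := CD_bounds D' 1 S₁ h1 s hs1
      have : min s.2 t = min s.2 (min t (2 ^ D')) := by omega
      rw [this]
    rw [hP1]
    ring
  rw [Finset.sum_congr rfl fun S₁ h1 => Finset.sum_congr rfl fun S₂ h2 => hmain S₁ h1 S₂ h2]
  have hfac : (∑ S₁ ∈ CD D' 1, ∑ S₂ ∈ CD D' (1 + 2 ^ D'), (1 - γ) *
      ((omegaWt γ D' 1 S₁ * ∏ s ∈ S₁.filter (fun s => s.1 ≤ min t (2 ^ D')),
          kteSeg e a s.1 (min s.2 (min t (2 ^ D'))))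
       * (omegaWt γ D' (1 + 2 ^ D') S₂ * ∏ s ∈ S₂.filter (fun s => s.1 ≤ t),
          kteSeg e a s.1 (min s.2 t))))
      = (1 - γ) * (∑ S₁ ∈ CD D' 1, omegaWt γ D' 1 S₁ *
            ∏ s ∈ S₁.filter (fun s => s.1 ≤ min t (2 ^ D')),
              kteSeg e a s.1 (min s.2 (min t (2 ^ D')))) *
        (∑ S₂ ∈ CD D' (1 + 2 ^ D'), omegaWt γ D' (1 + 2 ^ D') S₂ *
            ∏ s ∈ S₂.filter (fun s => s.1 ≤ t), kteSeg e a s.1 (min s.2 t)) := by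
    symm
    rw [mul_assoc, Finset.sum_mul_sum, Finset.mul_sum]
    exact Finset.sum_congr rfl fun S₁ _ => Finset.mul_sum _ _ _
  rw [hfac, ptwKTEγ]
  by_cases hle : t ≤ 2 ^ D'
  · rw [if_pos hle]
    have hg : ∀ S₂ ∈ CD D' (1 + 2 ^ D'),
        omegaWt γ D' (1 + 2 ^ D') S₂ *
          ∏ s ∈ S₂.filter (fun s => s.1 ≤ t), kteSeg e a s.1 (min s.2 t)
        = omegaWt γ D' (1 + 2 ^ D') S₂ := by
      intro S₂ h2
      have : S₂.filter (fun s => s.1 ≤ t) = ∅ := by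
        rw [Finset.filter_eq_empty_iff]
        intro s hs
        have hb := CD_bounds D' _ S₂ h2 s hs
        omega
      rw [this, Finset.prod_empty, mul_one]
    rw [Finset.sum_congr rfl hg, omega_sum]
  · rw [if_neg hle, ptwKTEγ, show (2:ℕ) ^ D' + 1 = 1 + 2 ^ D' from by omega]
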